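/- Consider the decentralized SGD iterates w_S with common initialization w_S 0 i = w0 for all workers i. Assume f is L-Lipschitz in w (for every z, f_z is differentiable and ‖∇f_z w‖ ≤ L for all w, with L > 0) and λ ∈ [0,1) is a consensus rate for P. Then for every t : ℕ, Real.sqrt (∑_{i : Fin m} ‖w̄_S t - w_S t i‖^2) ≤ 2 * Real.sqrt m * L * ∑_{q=1}^{t} η q * λ^(t-q). -/
import Mathlib

lemma aux_minkowski {m : ℕ} {E : Type*} [NormedAddCommGroup E]
    (a b : Fin m → E) :
    Real.sqrt (∑ i, ‖a i + b i‖ ^ 2) ≤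
      Real.sqrt (∑ i, ‖a i‖ ^ 2) + Real.sqrt (∑ i, ‖b i‖ ^ 2) := by
  set A := Real.sqrt (∑ i, ‖a i‖ ^ 2) with hA
  set B := Real.sqrt (∑ i, ‖b i‖ ^ 2) with hB
  have hA0 : 0 ≤ A := Real.sqrt_nonneg _
  have hB0 : 0 ≤ B := Real.sqrt_nonneg _
  have hA2 : A ^ 2 = ∑ i, ‖a i‖ ^ 2 :=
    Real.sq_sqrt (Finset.sum_nonneg fun i _ => sq_nonneg _)
  have hB2 : B ^ 2 = ∑ i, ‖b i‖ ^ 2 :=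
    Real.sq_sqrt (Finset.sum_nonneg fun i _ => sq_nonneg _)
  have hcs : ∑ i, ‖a i‖ * ‖b i‖ ≤ A * B := by
    have h := Finset.sum_mul_sq_le_sq_mul_sq Finset.univ (fun i => ‖a i‖) (fun i => ‖b i‖)
    have h0 : 0 ≤ ∑ i, ‖a i‖ * ‖b i‖ :=
      Finset.sum_nonneg fun i _ => mul_nonneg (norm_nonneg _) (norm_nonneg _)
    nlinarith [mul_nonneg hA0 hB0]
  have key : ∑ i, ‖a i + b i‖ ^ 2 ≤ (A + B) ^ 2 := by
    have h1 : ∑ i, ‖a i + b i‖ ^ 2 ≤ ∑ i, (‖a i‖ + ‖b i‖) ^ 2 := by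
      refine Finset.sum_le_sum fun i _ => ?_
      have := norm_add_le (a i) (b i)
      nlinarith [norm_nonneg (a i + b i)]
    have h2 : ∑ i, (‖a i‖ + ‖b i‖) ^ 2
        = (∑ i, ‖a i‖ ^ 2) + 2 * (∑ i, ‖a i‖ * ‖b i‖) + ∑ i, ‖b i‖ ^ 2 := by
      rw [Finset.mul_sum, ← Finset.sum_add_distrib, ← Finset.sum_add_distrib]
      refine Finset.sum_congr rfl fun i _ => by ring
    nlinarith
  calc Real.sqrt (∑ i, ‖a i + b i‖ ^ 2) ≤ Real.sqrt ((A + B) ^ 2) := Real.sqrt_le_sqrt key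
    _ = A + B := Real.sqrt_sq (by positivity)

theorem stmt_4 (d m n : ℕ) (hd : 1 ≤ d) (hm : 1 ≤ m) (hn : 1 ≤ n)
    {Z : Type*} (f : EuclideanSpace ℝ (Fin d) → Z → ℝ)
    (L : ℝ) (hL : 0 < L)
    (hdiff : ∀ z : Z, Differentiable ℝ (fun w => f w z))
    (hgrad : ∀ (z : Z) (w : EuclideanSpace ℝ (Fin d)),
      ‖gradient (fun w' => f w' z) w‖ ≤ L)
    (P : Fin m → Fin m → ℝ)
    (hPsymm : ∀ i l, P i l = P l i)
    (hPnonneg : ∀ i l, 0 ≤ P i l)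
    (hProw : ∀ i, ∑ l, P i l = 1)
    (lam : ℝ) (hlam0 : 0 ≤ lam) (hlam1 : lam < 1)
    (hcons : ∀ x : Fin m → EuclideanSpace ℝ (Fin d), ∑ i, x i = 0 →
      ∑ i, ‖∑ l, P i l • x l‖ ^ 2 ≤ lam ^ 2 * ∑ i, ‖x i‖ ^ 2)
    (S : Fin m → Fin n → Z) (j : ℕ → Fin m → Fin n)
    (η : ℕ → ℝ) (hη : ∀ t, 0 ≤ η t)
    (w0 : EuclideanSpace ℝ (Fin d))
    (wS : ℕ → Fin m → EuclideanSpace ℝ (Fin d))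
    (hwS0 : ∀ i, wS 0 i = w0)
    (hwSrec : ∀ t i, wS (t + 1) i =
      (∑ l, P i l • wS t l) -
        η (t + 1) • gradient (fun w => f w (S i (j (t + 1) i))) (wS t i))
    (t : ℕ) :
    Real.sqrt (∑ i, ‖((m : ℝ)⁻¹ • ∑ i', wS t i') - wS t i‖ ^ 2)
      ≤ 2 * Real.sqrt (m : ℝ) * L * ∑ q ∈ Finset.Icc 1 t, η q * lam ^ (t - q) := by
  have hm0 : (m : ℝ) ≠ 0 := Nat.cast_ne_zero.mpr (by omega)
  have hmpos : (0 : ℝ) < (m : ℝ) := by positivity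
  set C : ℝ := 2 * Real.sqrt (m : ℝ) * L with hC
  have hC0 : 0 ≤ C := by positivity
  set Δ : ℕ → Fin m → EuclideanSpace ℝ (Fin d) :=
    fun t i => ((m : ℝ)⁻¹ • ∑ i', wS t i') - wS t i with hΔ
  set D : ℕ → ℝ := fun t => Real.sqrt (∑ i, ‖Δ t i‖ ^ 2) with hD
  have hcol : ∀ l, ∑ i, P i l = 1 := by
    intro l; simp_rw [hPsymm]; exact hProw l
  have hsum0 : ∀ s, ∑ i, Δ s i = 0 := by
    intro s
    simp only [hΔ]
    rw [Finset.sum_sub_distrib, Finset.sum_const, Finset.card_univ, Fintype.card_fin,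
      sub_eq_zero, ← Nat.cast_smul_eq_nsmul ℝ, smul_smul, mul_inv_cancel₀ hm0, one_smul]
  have hD0 : ∀ s, 0 ≤ D s := fun s => Real.sqrt_nonneg _
  -- one-step recursion bound
  have key : ∀ s : ℕ, D (s + 1) ≤ lam * D s + η (s + 1) * C := by
    intro s
    set g : Fin m → EuclideanSpace ℝ (Fin d) :=
      fun i => gradient (fun w => f w (S i (j (s + 1) i))) (wS s i) with hg
    set gbar : EuclideanSpace ℝ (Fin d) := (m : ℝ)⁻¹ • ∑ i, g i with hgbar
    have hbar1 : (m : ℝ)⁻¹ • ∑ i, wS (s + 1) i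
        = ((m : ℝ)⁻¹ • ∑ i', wS s i') - η (s + 1) • gbar := by
      simp_rw [hwSrec s]
      rw [Finset.sum_sub_distrib]
      have h1 : ∑ i, ∑ l, P i l • wS s l = ∑ i, wS s i := by
        rw [Finset.sum_comm]
        simp_rw [← Finset.sum_smul, hcol, one_smul]
      have h2 : ∑ i : Fin m, η (s + 1) • g i = η (s + 1) • ∑ i, g i := by
        rw [Finset.smul_sum]
      rw [h1, h2, smul_sub, hgbar, smul_comm]
    have hΔrec : ∀ i, Δ (s + 1) i
        = (∑ l, P i l • Δ s l) + η (s + 1) • (g i - gbar) := by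
      intro i
      have hPΔ : ∑ l, P i l • Δ s l
          = ((m : ℝ)⁻¹ • ∑ i', wS s i') - ∑ l, P i l • wS s l := by
        simp only [hΔ, smul_sub]
        rw [Finset.sum_sub_distrib, ← Finset.sum_smul, hProw i, one_smul]
      simp only [hΔ]
      rw [hbar1, hwSrec s i, hPΔ, smul_sub]
      abel
    have hgnorm : ∀ i, ‖g i‖ ≤ L := fun i => hgrad _ _
    have hgbarnorm : ‖gbar‖ ≤ L := by
      rw [hgbar, norm_smul]
      have h1 : ‖∑ i, g i‖ ≤ (m : ℝ) * L := by
        calc ‖∑ i, g i‖ ≤ ∑ i, ‖g i‖ := norm_sum_le _ _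
          _ ≤ ∑ _i : Fin m, L := Finset.sum_le_sum fun i _ => hgnorm i
          _ = (m : ℝ) * L := by
              rw [Finset.sum_const, Finset.card_univ, Fintype.card_fin, nsmul_eq_mul]
      calc ‖(m : ℝ)⁻¹‖ * ‖∑ i, g i‖ = (m : ℝ)⁻¹ * ‖∑ i, g i‖ := by
            rw [Real.norm_eq_abs, abs_of_pos (by positivity)]
        _ ≤ (m : ℝ)⁻¹ * ((m : ℝ) * L) := by
            exact mul_le_mul_of_nonneg_left h1 (by positivity)
        _ = L := by field_simp
    have step1 : D (s + 1) ≤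
        Real.sqrt (∑ i, ‖∑ l, P i l • Δ s l‖ ^ 2)
          + Real.sqrt (∑ i, ‖η (s + 1) • (g i - gbar)‖ ^ 2) := by
      rw [hD]
      simp only []
      simp_rw [hΔrec]
      exact aux_minkowski _ _
    have step2 : Real.sqrt (∑ i, ‖∑ l, P i l • Δ s l‖ ^ 2) ≤ lam * D s := by
      have h := hcons (Δ s) (hsum0 s)
      calc Real.sqrt (∑ i, ‖∑ l, P i l • Δ s l‖ ^ 2)
          ≤ Real.sqrt (lam ^ 2 * ∑ i, ‖Δ s i‖ ^ 2) := Real.sqrt_le_sqrt h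
        _ = lam * D s := by
            rw [Real.sqrt_mul (sq_nonneg _), Real.sqrt_sq hlam0, hD]
    have step3 : Real.sqrt (∑ i, ‖η (s + 1) • (g i - gbar)‖ ^ 2) ≤ η (s + 1) * C := by
      have hbound : ∀ i : Fin m, ‖η (s + 1) • (g i - gbar)‖ ^ 2 ≤ (η (s + 1) * (2 * L)) ^ 2 := by
        intro i
        have h1 : ‖g i - gbar‖ ≤ 2 * L := by
          calc ‖g i - gbar‖ ≤ ‖g i‖ + ‖gbar‖ := norm_sub_le _ _
            _ ≤ 2 * L := by linarith [hgnorm i, hgbarnorm]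
        have h2 : ‖η (s + 1) • (g i - gbar)‖ ≤ η (s + 1) * (2 * L) := by
          rw [norm_smul, Real.norm_eq_abs, abs_of_nonneg (hη _)]
          exact mul_le_mul_of_nonneg_left h1 (hη _)
        have h3 : 0 ≤ ‖η (s + 1) • (g i - gbar)‖ := norm_nonneg _
        nlinarith
      calc Real.sqrt (∑ i, ‖η (s + 1) • (g i - gbar)‖ ^ 2)
          ≤ Real.sqrt (∑ _i : Fin m, (η (s + 1) * (2 * L)) ^ 2) :=
            Real.sqrt_le_sqrt (Finset.sum_le_sum fun i _ => hbound i)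
        _ = η (s + 1) * C := by
            rw [Finset.sum_const, Finset.card_univ, Fintype.card_fin, nsmul_eq_mul,
              Real.sqrt_mul (by positivity), Real.sqrt_sq (mul_nonneg (hη _) (by positivity)), hC]
            ring
    linarith
  -- induction
  suffices h : D t ≤ C * ∑ q ∈ Finset.Icc 1 t, η q * lam ^ (t - q) by
    simpa [hD, hΔ, hC] using h
  induction t with
  | zero =>
    have : ∀ i, Δ 0 i = 0 := by
      intro i
      simp only [hΔ, hwS0, Finset.sum_const, Finset.card_univ, Fintype.card_fin,
        sub_eq_zero, ← Nat.cast_smul_eq_nsmul ℝ, smul_smul]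
      rw [inv_mul_cancel₀ hm0, one_smul]
    simp [hD, this]
  | succ s ih =>
    have hsum : ∑ q ∈ Finset.Icc 1 (s + 1), η q * lam ^ (s + 1 - q)
        = (∑ q ∈ Finset.Icc 1 s, η q * lam ^ (s - q)) * lam + η (s + 1) := by
      rw [Finset.sum_Icc_succ_top (by omega : 1 ≤ s + 1)]
      simp only [Nat.sub_self, pow_zero, mul_one]
      congr 1
      rw [Finset.sum_mul]
      refine Finset.sum_congr rfl fun q hq => ?_
      have hq' : q ≤ s := (Finset.mem_Icc.mp hq).2
      have h : s + 1 - q = (s - q) + 1 := by omega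
      rw [h, pow_succ]; ring
    calc D (s + 1) ≤ lam * D s + η (s + 1) * C := key s
      _ ≤ lam * (C * ∑ q ∈ Finset.Icc 1 s, η q * lam ^ (s - q)) + η (s + 1) * C := by
          have := mul_le_mul_of_nonneg_left ih hlam0
          linarith
      _ = C * ∑ q ∈ Finset.Icc 1 (s + 1), η q * lam ^ (s + 1 - q) := by
          rw [hsum]; ring
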